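/- Dirichlet's divisor estimate: Σ_{n ≤ x} d(n) = x log x + (2γ − 1)x + O(√x) as x → ∞. -/

import Mathlib

open Finset Filter Asymptotics Real
set_option maxHeartbeats 1000000

lemma lemA (N : ℕ) :
    ∑ n ∈ Icc 1 N, (n.divisors.card) = ∑ a ∈ Icc 1 N, N / a := by
  have h1 : ∀ n ∈ Icc 1 N, (n.divisors.card) = ((Icc 1 N).filter (· ∣ n)).card := by
    intro n hn
    rw [mem_Icc] at hn
    congr 1
    ext a
    simp only [Nat.mem_divisors, mem_filter, mem_Icc]
    constructor
    · rintro ⟨hd, hn0⟩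
      exact ⟨⟨Nat.one_le_iff_ne_zero.2 (by rintro rfl; exact hn0 (zero_dvd_iff.1 hd)),
        (Nat.le_of_dvd (by omega) hd).trans hn.2⟩, hd⟩
    · rintro ⟨_, hd⟩
      exact ⟨hd, by omega⟩
  rw [Finset.sum_congr rfl h1]
  simp only [Finset.card_filter]
  rw [Finset.sum_comm]
  refine Finset.sum_congr rfl fun a _ => ?_
  rw [← Finset.card_filter]
  have : Icc 1 N = Ioc 0 N := by rw [← Finset.Icc_add_one_left_eq_Ioc]; simp
  rw [this, Nat.Ioc_filter_dvd_card_eq_div]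

lemma lemB (N : ℕ) :
    (∑ a ∈ Icc 1 N, N / a) + (Nat.sqrt N) * (Nat.sqrt N)
      = 2 * ∑ a ∈ Icc 1 (Nat.sqrt N), N / a := by
  set K := Nat.sqrt N with hK
  have hsq : K * K ≤ N := by have := Nat.sqrt_le' N; simpa [pow_two] using this
  have hlt : N < (K + 1) * (K + 1) := by
    have := Nat.lt_succ_sqrt' N; simpa [pow_two, Nat.succ_eq_add_one] using this
  have hIcc : ∀ m : ℕ, Icc 1 m = Ioc 0 m := fun m => by rw [← Finset.Icc_add_one_left_eq_Ioc]; simp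
  have hKN : K ≤ N := Nat.sqrt_le_self N
  have hsplit : ∑ a ∈ Ioc 0 N, N / a
      = (∑ a ∈ Ioc 0 K, N / a) + ∑ a ∈ Ioc K N, N / a :=
    (Finset.sum_Ioc_consecutive _ (Nat.zero_le K) hKN).symm
  have key : ∀ a ∈ Ioc K N, N / a = ((Ioc 0 K).filter (fun b => a * b ≤ N)).card := by
    intro a ha
    rw [mem_Ioc] at ha
    have ha0 : 0 < a := lt_of_le_of_lt (Nat.zero_le K) ha.1
    have hNa : N / a ≤ K := by
      have h1 : N / a ≤ N / (K + 1) := Nat.div_le_div_left ha.1 (Nat.succ_pos K)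
      have h2 : N / (K + 1) < K + 1 := (Nat.div_lt_iff_lt_mul (Nat.succ_pos K)).2 hlt
      omega
    have he : (Ioc 0 K).filter (fun b => a * b ≤ N) = Ioc 0 (N / a) := by
      ext b
      simp only [mem_filter, mem_Ioc]
      rw [mul_comm, ← Nat.le_div_iff_mul_le ha0]
      omega
    rw [he, Nat.card_Ioc, Nat.sub_zero]
  have hKle : ∀ b ∈ Ioc 0 K, K ≤ N / b := by
    intro b hb
    rw [mem_Ioc] at hb
    exact (Nat.le_div_iff_mul_le hb.1).2 ((Nat.mul_le_mul_left K hb.2).trans hsq)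
  have key2 : ∀ b ∈ Ioc 0 K, ((Ioc K N).filter (fun a => a * b ≤ N)).card = N / b - K := by
    intro b hb
    have hb' := hb
    rw [mem_Ioc] at hb'
    have hbN : N / b ≤ N := Nat.div_le_self N b
    have he : (Ioc K N).filter (fun a => a * b ≤ N) = Ioc K (N / b) := by
      ext a
      simp only [mem_filter, mem_Ioc]
      rw [← Nat.le_div_iff_mul_le hb'.1]
      omega
    rw [he, Nat.card_Ioc]
  have tail : ∑ a ∈ Ioc K N, N / a = ∑ b ∈ Ioc 0 K, (N / b - K) := by
    calc ∑ a ∈ Ioc K N, N / a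
        = ∑ a ∈ Ioc K N, ((Ioc 0 K).filter (fun b => a * b ≤ N)).card :=
          Finset.sum_congr rfl key
      _ = ∑ a ∈ Ioc K N, ∑ b ∈ Ioc 0 K, if a * b ≤ N then 1 else 0 :=
          Finset.sum_congr rfl fun a _ => Finset.card_filter _ _
      _ = ∑ b ∈ Ioc 0 K, ∑ a ∈ Ioc K N, if a * b ≤ N then 1 else 0 := Finset.sum_comm
      _ = ∑ b ∈ Ioc 0 K, ((Ioc K N).filter (fun a => a * b ≤ N)).card :=
          Finset.sum_congr rfl fun b _ => (Finset.card_filter _ _).symm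
      _ = ∑ b ∈ Ioc 0 K, (N / b - K) := Finset.sum_congr rfl key2
  have hcard : (∑ b ∈ Ioc 0 K, K) = K * K := by
    rw [Finset.sum_const, Nat.card_Ioc]
    simp [Nat.mul_comm]
  have final : (∑ b ∈ Ioc 0 K, (N / b - K)) + K * K = ∑ b ∈ Ioc 0 K, N / b := by
    rw [← hcard, ← Finset.sum_add_distrib]
    exact Finset.sum_congr rfl fun b hb => by have := hKle b hb; omega
  simp only [hIcc]
  rw [hsplit, tail]
  omega

lemma harm_eq (K : ℕ) : ((harmonic K : ℚ) : ℝ) = ∑ a ∈ Icc 1 K, ((a : ℝ))⁻¹ := by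
  rw [harmonic]
  push_cast
  rw [← Finset.Ico_add_one_right_eq_Icc, Finset.sum_Ico_eq_sum_range]
  refine Finset.sum_congr (by norm_num) fun i _ => ?_
  push_cast
  ring

lemma lemC (K : ℕ) (hK : 1 ≤ K) :
    |(∑ a ∈ Icc 1 K, ((a : ℝ))⁻¹) - Real.log K - Real.eulerMascheroniConstant|
      ≤ (K : ℝ)⁻¹ := by
  rw [← harm_eq]
  have hKpos : (0:ℝ) < K := by exact_mod_cast hK
  have h1 : Real.eulerMascheroniConstant < (harmonic K : ℝ) - Real.log K := by
    have := Real.eulerMascheroniConstant_lt_eulerMascheroniSeq' K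
    rwa [Real.eulerMascheroniSeq', if_neg (by omega)] at this
  have h2 : (harmonic K : ℝ) - Real.log (K + 1) < Real.eulerMascheroniConstant := by
    have := Real.eulerMascheroniSeq_lt_eulerMascheroniConstant K
    rwa [Real.eulerMascheroniSeq] at this
  have h3 : Real.log (K + 1) - Real.log K ≤ (K:ℝ)⁻¹ := by
    rw [← Real.log_div (by positivity) (by positivity)]
    have := Real.log_le_sub_one_of_pos (x := ((K:ℝ)+1)/K) (by positivity)
    have heq : ((K:ℝ)+1)/K - 1 = (K:ℝ)⁻¹ := by field_simp; ring
    linarith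
  rw [abs_le]; constructor <;> nlinarith [inv_nonneg.2 hKpos.le]

lemma lemD (K : ℕ) (hK : 1 ≤ K) : Real.log (K + 1) - Real.log K ≤ (K:ℝ)⁻¹ := by
  have hKpos : (0:ℝ) < K := by exact_mod_cast hK
  rw [← Real.log_div (by positivity) (by positivity)]
  have := Real.log_le_sub_one_of_pos (x := ((K:ℝ)+1)/K) (by positivity)
  have heq : ((K:ℝ)+1)/K - 1 = (K:ℝ)⁻¹ := by field_simp; ring
  linarith

open Filter Asymptotics Real in
theorem dirichlet_divisor :
    (fun x : ℝ => (∑ n ∈ Finset.Icc 1 ⌊x⌋₊, ((n.divisors.card : ℝ))) -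
        (x * Real.log x + (2 * Real.eulerMascheroniConstant - 1) * x)) =O[atTop]
      (fun x : ℝ => Real.sqrt x) := by
  refine Asymptotics.IsBigO.of_bound 14 ?_
  filter_upwards [eventually_ge_atTop (4:ℝ)] with x hx
  set γ := Real.eulerMascheroniConstant with hγ
  set N := ⌊x⌋₊ with hNdef
  set K := Nat.sqrt N with hKdef
  have hx0 : (0:ℝ) < x := by linarith
  have hN4 : 4 ≤ N := Nat.le_floor (by exact_mod_cast hx)
  have hNx : (N:ℝ) ≤ x := Nat.floor_le hx0.le
  have hxN : x < N + 1 := Nat.lt_floor_add_one x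
  have hsq : K * K ≤ N := by have := Nat.sqrt_le' N; simpa [pow_two] using this
  have hlt : N < (K + 1) * (K + 1) := by
    have := Nat.lt_succ_sqrt' N; simpa [pow_two, Nat.succ_eq_add_one] using this
  have hK2 : 2 ≤ K := by
    rw [hKdef, Nat.le_sqrt]; omega
  have hK1 : 1 ≤ K := by omega
  have hKpos : (0:ℝ) < K := by exact_mod_cast hK1
  have hsx : (0:ℝ) ≤ Real.sqrt x := Real.sqrt_nonneg x
  have hsx2 : 2 ≤ Real.sqrt x := by
    rw [Real.le_sqrt (by norm_num) hx0.le]; nlinarith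
  have hKx : (K:ℝ) ≤ Real.sqrt x := by
    rw [Real.le_sqrt (by positivity) hx0.le]
    have : ((K*K : ℕ) : ℝ) ≤ (N:ℝ) := by exact_mod_cast hsq
    push_cast at this
    nlinarith
  have hxK : Real.sqrt x < (K:ℝ) + 1 := by
    rw [Real.sqrt_lt' (by positivity)]
    have : ((N:ℝ)+1) ≤ (((K+1)*(K+1) : ℕ) : ℝ) := by exact_mod_cast hlt
    push_cast at this
    nlinarith
  have hKhalf : Real.sqrt x / 2 ≤ (K:ℝ) := by linarith
  have hxsq : Real.sqrt x * Real.sqrt x = x := Real.mul_self_sqrt hx0.le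
  -- the combinatorial identity, cast to ℝ
  set T : ℝ := ∑ a ∈ Icc 1 K, (((N / a : ℕ)) : ℝ) with hTdef
  have hid : (∑ n ∈ Icc 1 N, ((n.divisors.card : ℝ))) = 2 * T - (K:ℝ) * K := by
    have h := lemB N
    rw [← lemA N] at h
    have h' := congrArg (fun n : ℕ => (n:ℝ)) h
    push_cast at h'
    rw [hTdef]
    linarith
  set H : ℝ := ∑ a ∈ Icc 1 K, ((a:ℝ))⁻¹ with hHdef
  -- bound T - x*H
  have hT1 : |T - x * H| ≤ 2 * K := by
    rw [Finset.mul_sum, hTdef, ← Finset.sum_sub_distrib]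
    calc |∑ a ∈ Icc 1 K, ((((N / a : ℕ)) : ℝ) - x * ((a:ℝ))⁻¹)|
        ≤ ∑ a ∈ Icc 1 K, |(((N / a : ℕ)) : ℝ) - x * ((a:ℝ))⁻¹| :=
          Finset.abs_sum_le_sum_abs _ _
      _ ≤ ∑ _a ∈ Icc 1 K, (2:ℝ) := by
          refine Finset.sum_le_sum fun a ha => ?_
          rw [mem_Icc] at ha
          have ha0 : (0:ℝ) < a := by exact_mod_cast ha.1
          have hub : (((N / a : ℕ)) : ℝ) ≤ x * ((a:ℝ))⁻¹ := by
            calc (((N / a : ℕ)) : ℝ) ≤ (N:ℝ) / a := Nat.cast_div_le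
              _ ≤ x / a := by gcongr
              _ = x * ((a:ℝ))⁻¹ := div_eq_mul_inv x _
          have hlb : x * ((a:ℝ))⁻¹ ≤ (((N / a : ℕ)) : ℝ) + 2 := by
            have hdm := Nat.div_add_mod N a
            have hmlt : N % a < a := Nat.mod_lt N (by omega)
            have hNlt : (N:ℝ) < ((((N / a : ℕ)) : ℝ) + 1) * a := by
              have hq : N < (N / a + 1) * a := by
                calc N = a * (N / a) + N % a := (Nat.div_add_mod N a).symm
                  _ < a * (N / a) + a := by omega
                  _ = (N / a + 1) * a := by ring
              exact_mod_cast hq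
            have ha1 : (1:ℝ) ≤ a := by exact_mod_cast ha.1
            rw [← div_eq_mul_inv, div_le_iff₀ ha0]
            nlinarith
          rw [abs_le]
          constructor <;> linarith
      _ = 2 * K := by
          rw [Finset.sum_const, Nat.card_Icc]
          simp [mul_comm]
  -- bound on harmonic sum
  have hT2 : |H - Real.log K - γ| ≤ ((K:ℝ))⁻¹ := lemC K hK1
  -- bound log K vs (log x)/2
  have hT3 : |Real.log K - Real.log x / 2| ≤ ((K:ℝ))⁻¹ := by
    rw [← Real.log_sqrt hx0.le]
    have h1 : Real.log K ≤ Real.log (Real.sqrt x) :=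
      Real.log_le_log hKpos hKx
    have h2 : Real.log (Real.sqrt x) ≤ Real.log K + ((K:ℝ))⁻¹ := by
      have h3 : Real.log (Real.sqrt x) ≤ Real.log ((K:ℝ)+1) :=
        Real.log_le_log (by positivity) hxK.le
      have := lemD K hK1
      push_cast at this
      linarith
    rw [abs_le]; constructor <;> linarith
  -- bound x - K^2
  have hT4 : |x - (K:ℝ)*K| ≤ 2 * Real.sqrt x := by
    have hKK : (K:ℝ)*K ≤ x := by nlinarith [hKx, hxsq, hKpos.le, hsx]
    have hKK2 : x - 2*Real.sqrt x < (K:ℝ)*K := by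
      nlinarith [mul_pos (show (0:ℝ) < (K:ℝ)+1-Real.sqrt x by linarith)
        (show (0:ℝ) < (K:ℝ)+Real.sqrt x-1 by linarith), hxsq]
    rw [abs_le]
    constructor <;> linarith
  -- assemble
  have hxKinv : x * ((K:ℝ))⁻¹ ≤ 2 * Real.sqrt x := by
    rw [← div_eq_mul_inv, div_le_iff₀ hKpos]
    nlinarith [hKhalf, hxsq, hsx]
  have hKsx : 2 * (K:ℝ) ≤ 2 * Real.sqrt x := by linarith
  have hdecomp : (∑ n ∈ Icc 1 N, ((n.divisors.card : ℝ))) -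
      (x * Real.log x + (2 * γ - 1) * x)
      = 2 * (T - x * H) + 2 * x * (H - Real.log K - γ)
        + 2 * x * (Real.log K - Real.log x / 2) + (x - (K:ℝ)*K) := by
    rw [hid]; ring
  rw [Real.norm_eq_abs, Real.norm_eq_abs, abs_of_nonneg hsx, hdecomp]
  have e1 : |2 * (T - x * H)| ≤ 4 * Real.sqrt x := by
    rw [abs_mul, abs_two]; linarith [hT1, hKsx]
  have e2 : |2 * x * (H - Real.log K - γ)| ≤ 4 * Real.sqrt x := by
    rw [abs_mul, abs_of_nonneg (by linarith : (0:ℝ) ≤ 2*x)]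
    calc 2 * x * |H - Real.log K - γ| ≤ 2 * x * ((K:ℝ))⁻¹ :=
          mul_le_mul_of_nonneg_left hT2 (by linarith)
      _ = 2 * (x * ((K:ℝ))⁻¹) := by ring
      _ ≤ 2 * (2 * Real.sqrt x) := by linarith
      _ = 4 * Real.sqrt x := by ring
  have e3 : |2 * x * (Real.log K - Real.log x / 2)| ≤ 4 * Real.sqrt x := by
    rw [abs_mul, abs_of_nonneg (by linarith : (0:ℝ) ≤ 2*x)]
    calc 2 * x * |Real.log K - Real.log x / 2| ≤ 2 * x * ((K:ℝ))⁻¹ :=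
          mul_le_mul_of_nonneg_left hT3 (by linarith)
      _ = 2 * (x * ((K:ℝ))⁻¹) := by ring
      _ ≤ 2 * (2 * Real.sqrt x) := by linarith
      _ = 4 * Real.sqrt x := by ring
  calc |2 * (T - x * H) + 2 * x * (H - Real.log K - γ)
        + 2 * x * (Real.log K - Real.log x / 2) + (x - (K:ℝ)*K)|
      ≤ |2 * (T - x * H) + 2 * x * (H - Real.log K - γ)
        + 2 * x * (Real.log K - Real.log x / 2)| + |x - (K:ℝ)*K| := abs_add_le _ _
    _ ≤ |2 * (T - x * H) + 2 * x * (H - Real.log K - γ)|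
        + |2 * x * (Real.log K - Real.log x / 2)| + |x - (K:ℝ)*K| := by
          gcongr; exact abs_add_le _ _
    _ ≤ |2 * (T - x * H)| + |2 * x * (H - Real.log K - γ)|
        + |2 * x * (Real.log K - Real.log x / 2)| + |x - (K:ℝ)*K| := by
          gcongr; exact abs_add_le _ _
    _ ≤ 4 * Real.sqrt x + 4 * Real.sqrt x + 4 * Real.sqrt x + 2 * Real.sqrt x := by
          gcongr
    _ = 14 * Real.sqrt x := by ring
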